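/- Let c > 0, let m be a positive integer, and let f : ℝ → ℝ be real analytic on the interval (0, c) such that for every integer k ≥ m and every x ∈ (0, c) the k-th derivative satisfies f^{(k)}(x) > 0. Suppose that (1) there exists δ ∈ (0, c) such that for every x ∈ (0, δ) and every k ∈ {0, 1, …, m−1} one has f^{(k)}(x) < 0, and (2) for every k ∈ {0, 1, …, m−1} the left limit f^{(k)}(c−) := lim_{x→c−} f^{(k)}(x) exists and is strictly positive. Then f has exactly one zero in (0, c), i.e. there is exactly one x₀ ∈ (0, c) with f(x₀) = 0. -/

import Mathlib

open Real

open Set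

/-- Core step: if g is continuous on (0,c), its derivative is negative on (0,z)
and positive on (z,c) for some z ∈ [0,c), g is negative near 0, and g tends to a
positive limit at c⁻, then g has a unique sign-change zero. -/
lemma core_step (c : ℝ) (hc : 0 < c) (g : ℝ → ℝ)
    (hcont : ContinuousOn g (Set.Ioo 0 c))
    (z : ℝ) (hz0 : 0 ≤ z) (hzc : z < c)
    (hdneg : ∀ x ∈ Set.Ioo 0 z, deriv g x < 0)
    (hdpos : ∀ x ∈ Set.Ioo z c, 0 < deriv g x)
    (δ : ℝ) (hδ : δ ∈ Set.Ioo 0 c) (hgneg : ∀ x ∈ Set.Ioo 0 δ, g x < 0)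
    (L : ℝ) (hL : 0 < L)
    (hglim : Filter.Tendsto g (nhdsWithin c (Set.Iio c)) (nhds L)) :
    ∃ w ∈ Set.Ioo 0 c, (∀ x ∈ Set.Ioo 0 w, g x < 0) ∧ g w = 0 ∧
      (∀ x ∈ Set.Ioo w c, 0 < g x) := by
  obtain ⟨hδ0, hδc⟩ := hδ
  -- find a with z ≤ a, 0 < a < c, g < 0 on (0, a]
  obtain ⟨a, haz, ha0, hac, hga⟩ :
      ∃ a, z ≤ a ∧ 0 < a ∧ a < c ∧ ∀ x ∈ Set.Ioc 0 a, g x < 0 := by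
    rcases lt_or_ge z δ with h | h
    · refine ⟨(z + δ) / 2, by linarith, by linarith, by linarith, ?_⟩
      intro x hx
      exact hgneg x ⟨hx.1, by rcases hx with ⟨_, h2⟩; linarith⟩
    · -- δ ≤ z; g strictly decreasing on [δ/2, z]
      have hsub : Set.Icc (δ/2) z ⊆ Set.Ioo 0 c :=
        fun x hx => ⟨by rcases hx with ⟨h1,_⟩; linarith, by rcases hx with ⟨_,h2⟩; linarith⟩
      have hanti : StrictAntiOn g (Set.Icc (δ/2) z) := by
        apply strictAntiOn_of_deriv_neg (convex_Icc _ _) (hcont.mono hsub)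
        intro x hx
        rw [interior_Icc] at hx
        exact hdneg x ⟨by rcases hx with ⟨h1,_⟩; linarith, hx.2⟩
      refine ⟨z, le_refl _, by linarith, hzc, ?_⟩
      intro x hx
      rcases le_or_gt x (δ/2) with hx2 | hx2
      · exact hgneg x ⟨hx.1, by linarith⟩
      · calc g x < g (δ/2) := hanti ⟨le_refl _, by linarith⟩ ⟨le_of_lt hx2, hx.2⟩ hx2
          _ < 0 := hgneg _ ⟨by linarith, by linarith⟩
  -- g strictly increasing on [a, c)
  have hsub : Set.Ico a c ⊆ Set.Ioo 0 c := fun x hx => ⟨lt_of_lt_of_le ha0 hx.1, hx.2⟩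
  have hmono : StrictMonoOn g (Set.Ico a c) := by
    apply strictMonoOn_of_deriv_pos (convex_Ico _ _) (hcont.mono hsub)
    intro x hx
    rw [interior_Ico] at hx
    exact hdpos x ⟨lt_of_le_of_lt haz hx.1, hx.2⟩
  -- find a point with positive value
  have hev : ∀ᶠ x in nhdsWithin c (Set.Iio c), 0 < g x :=
    hglim.eventually (eventually_gt_nhds hL)
  rw [Filter.eventually_iff, mem_nhdsLT_iff_exists_Ioo_subset] at hev
  obtain ⟨b, hb, hbsub⟩ := hev
  set p := (max a b + c) / 2 with hp
  have hmaxc : max a b < c := max_lt hac hb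
  have hpmem : max a b < p ∧ p < c := ⟨by rw [hp]; linarith, by rw [hp]; linarith⟩
  have hap : a < p := lt_of_le_of_lt (le_max_left a b) hpmem.1
  have hgp : 0 < g p := hbsub ⟨lt_of_le_of_lt (le_max_right a b) hpmem.1, hpmem.2⟩
  -- IVT on [a, p]
  have hicc : Set.Icc a p ⊆ Set.Ioo 0 c :=
    fun x hx => ⟨lt_of_lt_of_le ha0 hx.1, lt_of_le_of_lt hx.2 hpmem.2⟩
  have hiv : (0:ℝ) ∈ Set.Ioo (g a) (g p) :=
    ⟨hga a ⟨ha0, le_refl _⟩, hgp⟩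
  obtain ⟨w, hw, hgw⟩ := intermediate_value_Ioo (le_of_lt hap) (hcont.mono hicc) hiv
  refine ⟨w, ⟨lt_trans ha0 hw.1, lt_trans hw.2 hpmem.2⟩, ?_, hgw, ?_⟩
  · intro x hx
    rcases le_or_gt x a with h | h
    · exact hga x ⟨hx.1, h⟩
    · have := hmono ⟨le_of_lt h, lt_trans (lt_trans hx.2 hw.2) hpmem.2⟩
        ⟨le_of_lt hw.1, lt_trans hw.2 hpmem.2⟩ hx.2
      rw [hgw] at this; exact this
  · intro x hx
    have := hmono ⟨le_of_lt hw.1, lt_trans hw.2 hpmem.2⟩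
      ⟨le_trans (le_of_lt hw.1) (le_of_lt hx.1), hx.2⟩ hx.1
    rw [hgw] at this; exact this


theorem exactly_one_zero (c : ℝ) (hc : 0 < c) (m : ℕ) (hm : 0 < m) (f : ℝ → ℝ)
    (hf : AnalyticOnNhd ℝ f (Set.Ioo 0 c))
    (hpos : ∀ k : ℕ, m ≤ k → ∀ x ∈ Set.Ioo (0 : ℝ) c, 0 < iteratedDeriv k f x)
    (hneg : ∃ δ ∈ Set.Ioo (0 : ℝ) c, ∀ x ∈ Set.Ioo (0 : ℝ) δ, ∀ k < m,
      iteratedDeriv k f x < 0)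
    (hlim : ∀ k < m, ∃ L : ℝ, 0 < L ∧
      Filter.Tendsto (iteratedDeriv k f) (nhdsWithin c (Set.Iio c)) (nhds L)) :
    ∃! x₀ : ℝ, x₀ ∈ Set.Ioo (0 : ℝ) c ∧ f x₀ = 0 := by
  obtain ⟨δ, hδ, hδneg⟩ := hneg
  -- analyticity and continuity of all iterated derivatives
  have hanal : ∀ k, AnalyticOnNhd ℝ (iteratedDeriv k f) (Set.Ioo 0 c) := by
    intro k
    induction k with
    | zero => simpa [iteratedDeriv_zero] using hf
    | succ n ih => rw [iteratedDeriv_succ]; exact ih.deriv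
  have hcont : ∀ k, ContinuousOn (iteratedDeriv k f) (Set.Ioo 0 c) :=
    fun k => fun x hx => ((hanal k x hx).continuousAt).continuousWithinAt
  -- downward induction
  have aux : ∀ d k, k + d + 1 = m →
      ∃ w ∈ Set.Ioo (0:ℝ) c, (∀ x ∈ Set.Ioo 0 w, iteratedDeriv k f x < 0) ∧
        iteratedDeriv k f w = 0 ∧ (∀ x ∈ Set.Ioo w c, 0 < iteratedDeriv k f x) := by
    intro d
    induction d with
    | zero =>
      intro k hk
      have hkm : k < m := by omega
      obtain ⟨L, hL, hLlim⟩ := hlim k hkm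
      refine core_step c hc _ (hcont k) 0 le_rfl hc ?_ ?_ δ hδ
        (fun x hx => hδneg x hx k hkm) L hL hLlim
      · intro x hx; exact absurd hx (by simp)
      · intro x hx
        have : m ≤ k + 1 := by omega
        have := hpos (k+1) this x hx
        rwa [iteratedDeriv_succ] at this
    | succ n ih =>
      intro k hk
      have hkm : k < m := by omega
      obtain ⟨L, hL, hLlim⟩ := hlim k hkm
      obtain ⟨z, hzmem, hzneg, hzzero, hzpos⟩ := ih (k+1) (by omega)
      refine core_step c hc _ (hcont k) z hzmem.1.le hzmem.2 ?_ ?_ δ hδ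
        (fun x hx => hδneg x hx k hkm) L hL hLlim
      · intro x hx
        have := hzneg x hx
        rwa [iteratedDeriv_succ] at this
      · intro x hx
        have := hzpos x hx
        rwa [iteratedDeriv_succ] at this
  obtain ⟨w, hw, hwneg, hwzero, hwpos⟩ := aux (m - 1) 0 (by omega)
  rw [iteratedDeriv_zero] at hwneg hwzero hwpos
  refine ⟨w, ⟨hw, hwzero⟩, ?_⟩
  rintro y ⟨hy, hfy⟩
  rcases lt_trichotomy y w with h | h | h
  · exact absurd hfy (ne_of_lt (hwneg y ⟨hy.1, h⟩))
  · exact h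
  · exact absurd hfy (ne_of_gt (hwpos y ⟨h, hy.2⟩))
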